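/- Let F : ℝⁿ → Set ℝⁿ be upper semicontinuous with F(x) nonempty, compact, and convex for every x, and let X_o, X_u ⊆ ℝⁿ. If the system ẋ ∈ F(x) is strongly robustly safe with respect to (X_o, X_u) and either ℝⁿ \ X_u is bounded or ℝⁿ \ X_o is bounded, then the system ẋ ∈ F(x) is uniformly strongly robustly safe with respect to (X_o, X_u). -/

import Mathlib

open Metric Set Filter MeasureTheory
open scoped Pointwise RealInnerProductSpace Topology

variable {E : Type*} [NormedAddCommGroup E] [NormedSpace ℝ E]

/-- Admissible solution domains: `[0,T]`, `[0,T)`, or `[0,∞)`. -/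
def SolDomain (D : Set ℝ) : Prop :=
  (∃ T : ℝ, 0 ≤ T ∧ D = Set.Icc 0 T) ∨ (∃ T : ℝ, 0 < T ∧ D = Set.Ico 0 T) ∨ D = Set.Ici 0

/-- `φ` is a (locally absolutely continuous) solution of `ẋ ∈ F x` on `D`,
expressed in integral form: `φ t = φ 0 + ∫₀ᵗ v`, with `v t ∈ F (φ t)` a.e. on `D`. -/
def IsSolutionOn (F : E → Set E) (φ : ℝ → E) (D : Set ℝ) : Prop :=
  SolDomain D ∧ ∃ v : ℝ → E,
    (∀ t ∈ D, MeasureTheory.IntegrableOn v (Set.Icc 0 t)) ∧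
    (∀ t ∈ D, φ t = φ 0 + ∫ s in (0:ℝ)..t, v s) ∧
    (∀ᵐ t ∂(MeasureTheory.volume.restrict D), v t ∈ F (φ t))

/-- Safety: no solution starting in `Xo` ever reaches `Xu`. -/
def Safe (F : E → Set E) (Xo Xu : Set E) : Prop :=
  ∀ (φ : ℝ → E) (D : Set ℝ), IsSolutionOn F φ D → φ 0 ∈ Xo → ∀ t ∈ D, φ t ∉ Xu

/-- Forward invariance of `K`. -/
def ForwardInvariant (F : E → Set E) (K : Set E) : Prop :=
  ∀ (φ : ℝ → E) (D : Set ℝ), IsSolutionOn F φ D → φ 0 ∈ K → ∀ t ∈ D, φ t ∈ K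

/-- Image of a set under a set-valued map: `F(S) = ⋃_{y ∈ S} F(y)`. -/
def svImage (F : E → Set E) (S : Set E) : Set E := ⋃ y ∈ S, F y

/-- Right-hand side of the strongly perturbed system `Σ^s_ε`:
`conv (F (x + ε(x)𝔹)) + ε(x)𝔹`. -/
def strongPert (F : E → Set E) (ε : E → ℝ) (x : E) : Set E :=
  convexHull ℝ (svImage F (Metric.closedBall x (ε x))) + Metric.closedBall (0:E) (ε x)

/-- Right-hand side of the (ordinary) perturbed system `Σ_ε`: `F x + ε(x)𝔹`. -/
def pert (F : E → Set E) (ε : E → ℝ) (x : E) : Set E :=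
  F x + Metric.closedBall (0:E) (ε x)

def RobustlySafe (F : E → Set E) (Xo Xu : Set E) : Prop :=
  ∃ ε : E → ℝ, Continuous ε ∧ (∀ x, 0 < ε x) ∧ Safe (pert F ε) Xo Xu

def StronglyRobustlySafe (F : E → Set E) (Xo Xu : Set E) : Prop :=
  ∃ ε : E → ℝ, Continuous ε ∧ (∀ x, 0 < ε x) ∧ Safe (strongPert F ε) Xo Xu

def UniformlyStronglyRobustlySafe (F : E → Set E) (Xo Xu : Set E) : Prop :=
  ∃ ε : ℝ, 0 < ε ∧ Safe (strongPert F (fun _ => ε)) Xo Xu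

/-- Upper semicontinuity of a set-valued map. -/
def UpperSemicontinuousSV (F : E → Set E) : Prop :=
  ∀ x : E, ∀ U : Set E, IsOpen U → F x ⊆ U → ∀ᶠ y in nhds x, F y ⊆ U

/-- Lower semicontinuity of a set-valued map (sequential form). -/
def LowerSemicontinuousSV (F : E → Set E) : Prop :=
  ∀ x : E, ∀ y ∈ F x, ∀ u : ℕ → E, Filter.Tendsto u Filter.atTop (nhds x) →
    ∃ v : ℕ → E, (∀ i, v i ∈ F (u i)) ∧ Filter.Tendsto v Filter.atTop (nhds y)

section Aux

variable {E : Type*} [NormedAddCommGroup E] [NormedSpace ℝ E]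

lemma solDomain_nonneg {D : Set ℝ} (h : SolDomain D) {t : ℝ} (ht : t ∈ D) : 0 ≤ t := by
  rcases h with ⟨T, hT, rfl⟩ | ⟨T, hT, rfl⟩ | rfl
  · exact ht.1
  · exact ht.1
  · exact ht

lemma solDomain_Icc_subset {D : Set ℝ} (h : SolDomain D) {t : ℝ} (ht : t ∈ D) :
    Set.Icc 0 t ⊆ D := by
  rcases h with ⟨T, hT, rfl⟩ | ⟨T, hT, rfl⟩ | rfl
  · exact Set.Icc_subset_Icc le_rfl ht.2
  · exact fun s hs => ⟨hs.1, lt_of_le_of_lt hs.2 ht.2⟩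
  · exact fun s hs => hs.1

lemma IsSolutionOn.continuousOn_Icc {F : E → Set E} {φ : ℝ → E} {D : Set ℝ}
    [CompleteSpace E]
    (h : IsSolutionOn F φ D) {t₁ : ℝ} (ht₁ : t₁ ∈ D) : ContinuousOn φ (Set.Icc 0 t₁) := by
  obtain ⟨hD, v, hint, heq, -⟩ := h
  have hc : ContinuousOn (fun t => φ 0 + ∫ s in Set.Ioc 0 t, v s) (Set.Icc 0 t₁) :=
    continuousOn_const.add (intervalIntegral.continuousOn_primitive (hint t₁ ht₁))
  refine hc.congr fun t ht => ?_
  rw [heq t (solDomain_Icc_subset hD ht₁ ht), intervalIntegral.integral_of_le ht.1]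

lemma IsSolutionOn.restrict_Icc {F : E → Set E} {φ : ℝ → E} {D : Set ℝ}
    (h : IsSolutionOn F φ D) {t₁ : ℝ} (ht₁ : t₁ ∈ D) :
    IsSolutionOn F φ (Set.Icc 0 t₁) := by
  obtain ⟨hD, v, hint, heq, hae⟩ := h
  refine ⟨Or.inl ⟨t₁, solDomain_nonneg hD ht₁, rfl⟩, v, ?_, ?_, ?_⟩
  · exact fun t ht => hint t (solDomain_Icc_subset hD ht₁ ht)
  · exact fun t ht => heq t (solDomain_Icc_subset hD ht₁ ht)
  · exact ae_restrict_of_ae_restrict_of_subset (solDomain_Icc_subset hD ht₁) hae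

lemma IsSolutionOn.mono_rhs {F G : E → Set E} {φ : ℝ → E} {D : Set ℝ}
    (h : IsSolutionOn F φ D) (hD : MeasurableSet D)
    (hFG : ∀ t ∈ D, F (φ t) ⊆ G (φ t)) : IsSolutionOn G φ D := by
  obtain ⟨hdom, v, hint, heq, hae⟩ := h
  refine ⟨hdom, v, hint, heq, ?_⟩
  filter_upwards [hae, MeasureTheory.ae_restrict_mem hD] with t h1 h2
  exact hFG t h2 h1

lemma IsSolutionOn.shift {F : E → Set E} {φ : ℝ → E} {a b : ℝ}
    (h : IsSolutionOn F φ (Set.Icc 0 b)) (ha : 0 ≤ a) (hab : a ≤ b) :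
    IsSolutionOn F (fun t => φ (a + t)) (Set.Icc 0 (b - a)) := by
  obtain ⟨-, v, hint, heq, hae⟩ := h
  have hb : (0:ℝ) ≤ b := ha.trans hab
  refine ⟨Or.inl ⟨b - a, by linarith, rfl⟩, fun t => v (a + t), ?_, ?_, ?_⟩
  · intro t ht
    have h1 : MeasureTheory.IntegrableOn v (Set.Icc a (a + t)) :=
      (hint (a + t) ⟨by linarith [ht.1], by linarith [ht.2]⟩).mono_set
        (Set.Icc_subset_Icc ha le_rfl)
    have h2 : IntervalIntegrable v MeasureTheory.volume a (a + t) :=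
      (intervalIntegrable_iff_integrableOn_Icc_of_le (by linarith [ht.1])).2 h1
    have h3 := (h2.comp_add_left a)
    rw [intervalIntegrable_iff_integrableOn_Icc_of_le] at h3
    · convert h3 using 2
      · rfl
      · ring
      · ring
    · ring_nf; linarith [ht.1]
  · intro t ht
    have hta : a + t ∈ Set.Icc 0 b := ⟨by linarith [ht.1], by linarith [ht.2]⟩
    have ia : IntervalIntegrable v MeasureTheory.volume 0 a :=
      (intervalIntegrable_iff_integrableOn_Icc_of_le ha).2
        ((hint (a + t) hta).mono_set (Set.Icc_subset_Icc le_rfl (by linarith [ht.1])))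
    have ib : IntervalIntegrable v MeasureTheory.volume a (a + t) :=
      (intervalIntegrable_iff_integrableOn_Icc_of_le (by linarith [ht.1])).2
        ((hint (a + t) hta).mono_set (Set.Icc_subset_Icc ha le_rfl))
    simp only [add_zero]
    rw [heq (a + t) hta, heq a ⟨ha, hab⟩, intervalIntegral.integral_comp_add_left, add_zero,
      add_assoc, intervalIntegral.integral_add_adjacent_intervals ia ib]
  · rw [MeasureTheory.ae_iff] at hae ⊢
    rw [MeasureTheory.Measure.restrict_apply' measurableSet_Icc] at hae ⊢
    refine measure_mono_null ?_
      (((MeasureTheory.measurePreserving_add_left MeasureTheory.volume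
        a).quasiMeasurePreserving).preimage_null hae)
    intro s hs
    simp only [Set.mem_inter_iff, Set.mem_setOf_eq, Set.mem_Icc, Set.mem_preimage] at hs ⊢
    exact ⟨hs.1, ⟨by linarith [hs.2.1], by linarith [hs.2.2]⟩⟩

lemma isSolutionOn_singleton (F : E → Set E) (φ : ℝ → E) :
    IsSolutionOn F φ (Set.Icc 0 0) := by
  refine ⟨Or.inl ⟨0, le_rfl, rfl⟩, fun _ => 0, ?_, ?_, ?_⟩
  · intro t ht
    exact MeasureTheory.integrable_zero _ _ _
  · intro t ht
    have : t = 0 := le_antisymm ht.2 ht.1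
    subst this; simp
  · rw [show (MeasureTheory.volume.restrict (Set.Icc (0:ℝ) 0)) = 0 from
      MeasureTheory.Measure.restrict_eq_zero.2 (by simp)]
    simp

lemma Safe.not_mem_unsafe {F : E → Set E} {Xo Xu : Set E} (h : Safe F Xo Xu)
    {x : E} (hx : x ∈ Xo) : x ∉ Xu :=
  h (fun _ => x) _ (isSolutionOn_singleton F _) hx 0 ⟨le_rfl, le_rfl⟩

lemma strongPert_const_subset {F : E → Set E} {δ : ℝ} {ε : E → ℝ} {x : E} (h : δ ≤ ε x) :
    strongPert F (fun _ => δ) x ⊆ strongPert F ε x := by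
  unfold strongPert svImage
  apply Set.add_subset_add
  · exact convexHull_mono
      (Set.biUnion_mono (Metric.closedBall_subset_closedBall h) fun _ _ => le_rfl)
  · exact Metric.closedBall_subset_closedBall h

end Aux

/-- Strong robust safety plus boundedness of `ℝⁿ \ X_u` or of `ℝⁿ \ X_o`
implies uniform strong robust safety. -/
theorem stmt6 {n : ℕ} (F : EuclideanSpace ℝ (Fin n) → Set (EuclideanSpace ℝ (Fin n)))
    (hFusc : UpperSemicontinuousSV F)
    (hFne : ∀ x, (F x).Nonempty) (hFcpt : ∀ x, IsCompact (F x)) (hFcvx : ∀ x, Convex ℝ (F x))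
    (Xo Xu : Set (EuclideanSpace ℝ (Fin n)))
    (hsrs : StronglyRobustlySafe F Xo Xu)
    (hbd : Bornology.IsBounded Xuᶜ ∨ Bornology.IsBounded Xoᶜ) :
    UniformlyStronglyRobustlySafe F Xo Xu := by
  obtain ⟨ε, hεc, hεpos, hsafe⟩ := hsrs
  have hdisj : ∀ x ∈ Xo, x ∉ Xu := fun x hx => hsafe.not_mem_unsafe hx
  -- choose a radius R capturing the bounded complement
  obtain ⟨R, hR0, hcase⟩ : ∃ R : ℝ, 0 ≤ R ∧
      (Xuᶜ ⊆ Metric.closedBall 0 R ∨ Xoᶜ ⊆ Metric.closedBall 0 R) := by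
    rcases hbd with h | h
    · obtain ⟨R, hR⟩ := h.subset_closedBall 0
      exact ⟨max R 0, le_max_right _ _,
        Or.inl (hR.trans (Metric.closedBall_subset_closedBall (le_max_left _ _)))⟩
    · obtain ⟨R, hR⟩ := h.subset_closedBall 0
      exact ⟨max R 0, le_max_right _ _,
        Or.inr (hR.trans (Metric.closedBall_subset_closedBall (le_max_left _ _)))⟩
  -- minimum of ε on the closed ball of radius R + 1
  obtain ⟨x₀, hx₀K, hx₀min⟩ :=
    (isCompact_closedBall (0 : EuclideanSpace ℝ (Fin n)) (R + 1)).exists_isMinOn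
      ⟨0, Metric.mem_closedBall_self (by linarith)⟩ hεc.continuousOn
  set δ := ε x₀ with hδdef
  have hδpos : 0 < δ := hεpos x₀
  have hδle : ∀ x : EuclideanSpace ℝ (Fin n), ‖x‖ ≤ R + 1 → δ ≤ ε x := fun x hx =>
    hx₀min (mem_closedBall_zero_iff.2 hx)
  refine ⟨δ, hδpos, ?_⟩
  intro φ D hφ hφ0 t₁ ht₁ hmem
  have ht₁0 : (0:ℝ) ≤ t₁ := solDomain_nonneg hφ.1 ht₁
  have hsol1 : IsSolutionOn (strongPert F fun _ => δ) φ (Set.Icc 0 t₁) := hφ.restrict_Icc ht₁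
  have hcont : ContinuousOn φ (Set.Icc 0 t₁) := hφ.continuousOn_Icc ht₁
  -- key step : if the trajectory stays in the ball on [a, T] and starts (at a) in Xo,
  -- then it avoids Xu at T
  have key : ∀ a T : ℝ, 0 ≤ a → a ≤ T → T ≤ t₁ → φ a ∈ Xo →
      (∀ s ∈ Set.Icc a T, ‖φ s‖ ≤ R + 1) → φ T ∉ Xu := by
    intro a T ha haT hTt₁ hXoa hball
    have hT0 : (0:ℝ) ≤ T := ha.trans haT
    have hsol2 : IsSolutionOn (strongPert F fun _ => δ) φ (Set.Icc 0 T) :=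
      hsol1.restrict_Icc ⟨hT0, hTt₁⟩
    have hsol3 : IsSolutionOn (strongPert F fun _ => δ) (fun t => φ (a + t))
        (Set.Icc 0 (T - a)) := hsol2.shift ha haT
    have hsol4 : IsSolutionOn (strongPert F ε) (fun t => φ (a + t)) (Set.Icc 0 (T - a)) := by
      refine hsol3.mono_rhs measurableSet_Icc fun t ht => ?_
      exact strongPert_const_subset (hδle _ (hball (a + t) ⟨by linarith [ht.1], by linarith [ht.2]⟩))
    have h2 := hsafe (fun t => φ (a + t)) _ hsol4 (by simpa using hXoa) (T - a)
      ⟨by linarith, le_rfl⟩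
    have h3 : φ (a + (T - a)) ∉ Xu := h2
    rw [show a + (T - a) = T by ring] at h3
    exact h3
  -- the set of times in [0, t₁] where the trajectory is outside the ball of radius R+1
  set C : Set ℝ := Set.Icc 0 t₁ ∩ {t | R + 1 ≤ ‖φ t‖} with hCdef
  have hCclosed : IsClosed C :=
    hcont.norm.preimage_isClosed_of_isClosed isClosed_Icc isClosed_Ici
  set S : Set ℝ := Set.Icc 0 t₁ ∩ {t | ‖φ t‖ ≤ R + 1} with hSdef
  have hSclosed : IsClosed S :=
    hcont.norm.preimage_isClosed_of_isClosed isClosed_Icc isClosed_Iic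
  rcases hcase with hsub | hsub
  · -- Case 1 : Xuᶜ ⊆ closedBall 0 R
    have hXuc : ∀ x : EuclideanSpace ℝ (Fin n), x ∉ Xu → ‖x‖ ≤ R := fun x hx =>
      mem_closedBall_zero_iff.1 (hsub hx)
    have hφ0R : ‖φ 0‖ ≤ R := hXuc _ (hdisj _ hφ0)
    by_cases hC : C.Nonempty
    · set T := sInf C with hTdef
      have hTC : T ∈ C := hCclosed.csInf_mem hC ⟨0, fun x hx => hx.1.1⟩
      have hT0 : 0 < T := by
        rcases lt_or_eq_of_le hTC.1.1 with h | h
        · exact h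
        · exfalso; rw [← h] at hTC; have := hTC.2; simp only [Set.mem_setOf_eq] at this; linarith
      have hIco : Set.Ico 0 T ⊆ S := by
        intro s hs
        have hsnC : s ∉ C := fun hsC => absurd (csInf_le ⟨0, fun x hx => hx.1.1⟩ hsC)
          (not_le.2 hs.2)
        have hsI : s ∈ Set.Icc 0 t₁ := ⟨hs.1, le_trans hs.2.le hTC.1.2⟩
        refine ⟨hsI, ?_⟩
        by_contra hlt
        exact hsnC ⟨hsI, le_of_not_ge fun h => hlt (Set.mem_setOf_eq ▸ h)⟩
      have hball : ∀ s ∈ Set.Icc 0 T, ‖φ s‖ ≤ R + 1 := by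
        intro s hs
        have : s ∈ S := by
          have : Set.Icc 0 T ⊆ S := by
            rw [← closure_Ico hT0.ne]
            exact hSclosed.closure_subset_iff.2 hIco
          exact this hs
        exact this.2
      have hnotXu := key 0 T le_rfl hTC.1.1 hTC.1.2 hφ0 (by simpa using hball)
      have : ‖φ T‖ ≤ R := hXuc _ hnotXu
      have := hTC.2; simp only [Set.mem_setOf_eq] at this; linarith
    · have hball : ∀ s ∈ Set.Icc 0 t₁, ‖φ s‖ ≤ R + 1 := by
        intro s hs
        by_contra h
        exact hC ⟨s, hs, le_of_not_ge fun h2 => h (by simpa using h2)⟩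
      exact key 0 t₁ le_rfl ht₁0 le_rfl hφ0 (by simpa using hball) hmem
  · -- Case 2 : Xoᶜ ⊆ closedBall 0 R ; note Xu ⊆ Xoᶜ
    have hXo : ∀ x : EuclideanSpace ℝ (Fin n), R < ‖x‖ → x ∈ Xo := by
      intro x hx
      by_contra h
      exact absurd (mem_closedBall_zero_iff.1 (hsub h)) (not_le.2 hx)
    have hXuR : ‖φ t₁‖ ≤ R := by
      by_contra h
      exact hdisj _ (hXo _ (not_le.1 h)) hmem
    by_cases hC : C.Nonempty
    · set σ := sSup C with hσdef
      have hσC : σ ∈ C := hCclosed.csSup_mem hC ⟨t₁, fun x hx => hx.1.2⟩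
      have hσt₁ : σ < t₁ := by
        rcases lt_or_eq_of_le hσC.1.2 with h | h
        · exact h
        · exfalso; rw [h] at hσC; have := hσC.2; simp only [Set.mem_setOf_eq] at this; linarith
      have hIoc : Set.Ioc σ t₁ ⊆ S := by
        intro s hs
        have hsnC : s ∉ C := fun hsC => absurd (le_csSup ⟨t₁, fun x hx => hx.1.2⟩ hsC)
          (not_le.2 hs.1)
        have hsI : s ∈ Set.Icc 0 t₁ := ⟨le_trans hσC.1.1 hs.1.le, hs.2⟩
        refine ⟨hsI, ?_⟩
        by_contra hlt
        exact hsnC ⟨hsI, le_of_not_ge fun h => hlt (Set.mem_setOf_eq ▸ h)⟩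
      have hball : ∀ s ∈ Set.Icc σ t₁, ‖φ s‖ ≤ R + 1 := by
        intro s hs
        have : s ∈ S := by
          have : Set.Icc σ t₁ ⊆ S := by
            rw [← closure_Ioc hσt₁.ne]
            exact hSclosed.closure_subset_iff.2 hIoc
          exact this hs
        exact this.2
      have hXoσ : φ σ ∈ Xo := by
        refine hXo _ ?_
        have := hσC.2; simp only [Set.mem_setOf_eq] at this; linarith
      exact key σ t₁ hσC.1.1 hσt₁.le le_rfl hXoσ hball hmem
    · have hball : ∀ s ∈ Set.Icc 0 t₁, ‖φ s‖ ≤ R + 1 := by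
        intro s hs
        by_contra h
        exact hC ⟨s, hs, le_of_not_ge fun h2 => h (by simpa using h2)⟩
      exact key 0 t₁ le_rfl ht₁0 le_rfl hφ0 (by simpa using hball) hmem
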